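/- Let (a_n^{(j)})_{n} for j = 1,…,p be sequences of nonnegative reals with a_n^{(j)} = O(1/n) for all j (all ‘eigenvalues’ vanish at rate 1/n). Let c_{1n} → 0, c_{2n} → 0 with n² c_{1n} c_{2n} → ∞. Define s_n^{(j)} = a_n^{(j)}/(a_n^{(j)}+1), s_n^{*(j)} = (s_n^{(j)2} + c_{1n})/(s_n^{(j+1)2} + c_{1n}) − 1 (with s_n^{(p+1)} := 0), and r_n^{(j)} = (s_n^{*(j+1)} + c_{2n})/(s_n^{*(j)} + c_{2n}) (with s_n^{*(p+1)} := 0). Then for every fixed τ ∈ (0,1), eventually r_n^{(j)} > τ for all j ∈ {1,…,p}. -/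

import Mathlib

open Filter

/-- The transform `s_n^{(j)} = a_n^{(j)}/(a_n^{(j)}+1)` of the TDRR criterion, with the
convention `s_n^{(j)} = 0` for indices `j ≥ p` (0-indexed; `j = p` plays the role of the
extra index `p+1` in 1-indexed notation). -/
noncomputable def tdrrS (p : ℕ) (a : ℕ → ℕ → ℝ) (n j : ℕ) : ℝ :=
  if j < p then a n j / (a n j + 1) else 0

/-- The first ridge ratio `s_n^{*(j)} = (s_n^{(j)2}+c₁ₙ)/(s_n^{(j+1)2}+c₁ₙ) − 1`, with the
convention `s_n^{*(j)} = 0` for `j ≥ p`. -/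
noncomputable def tdrrSStar (p : ℕ) (a : ℕ → ℕ → ℝ) (c1 : ℕ → ℝ) (n j : ℕ) : ℝ :=
  if j < p then ((tdrrS p a n j) ^ 2 + c1 n) / ((tdrrS p a n (j + 1)) ^ 2 + c1 n) - 1 else 0

/-- The second ridge ratio `r_n^{(j)} = (s_n^{*(j+1)}+c₂ₙ)/(s_n^{*(j)}+c₂ₙ)`. -/
noncomputable def tdrrR (p : ℕ) (a : ℕ → ℕ → ℝ) (c1 c2 : ℕ → ℝ) (n j : ℕ) : ℝ :=
  (tdrrSStar p a c1 n (j + 1) + c2 n) / (tdrrSStar p a c1 n j + c2 n)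

/-- if all the nonnegative 'eigenvalue' sequences vanish at rate `O(1/n)`
and the ridges satisfy `c₁ₙ → 0`, `c₂ₙ → 0`, `n² c₁ₙ c₂ₙ → ∞`, then for every fixed
`τ ∈ (0,1)`, eventually `r_n^{(j)} > τ` for all `j ∈ {1,…,p}` (0-indexed: `j < p`). -/
theorem stmt12 {p : ℕ} (a : ℕ → ℕ → ℝ) (c1 c2 : ℕ → ℝ)
    (ha0 : ∀ n j, j < p → 0 ≤ a n j)
    (C : ℝ) (hC : ∀ n, 1 ≤ n → ∀ j < p, a n j ≤ C / n)
    (hc1pos : ∀ n, 0 < c1 n) (hc2pos : ∀ n, 0 < c2 n)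
    (hc1 : Tendsto c1 atTop (nhds 0)) (hc2 : Tendsto c2 atTop (nhds 0))
    (hprod : Tendsto (fun n : ℕ => (n : ℝ) ^ 2 * c1 n * c2 n) atTop atTop) :
    ∀ τ : ℝ, 0 < τ → τ < 1 →
      ∀ᶠ n in atTop, ∀ j < p, τ < tdrrR p a c1 c2 n j := by
  intro τ hτ0 hτ1
  rcases Nat.eq_zero_or_pos p with hp | hp
  · subst hp
    filter_upwards with n j hj
    exact absurd hj (Nat.not_lt_zero j)
  have hC0 : (0 : ℝ) ≤ C := by
    have h1 := hC 1 le_rfl 0 hp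
    have h2 := ha0 1 0 hp
    have := h2.trans h1
    simpa using this
  have h1τ : (0 : ℝ) < 1 - τ := by linarith
  filter_upwards [hprod.eventually_gt_atTop ((1 + τ) / (1 - τ) * C ^ 2),
      eventually_ge_atTop 1] with n hn hn1 j hj
  have hnR : (1 : ℝ) ≤ (n : ℝ) := by exact_mod_cast hn1
  have hnpos : (0 : ℝ) < (n : ℝ) := by linarith
  have hc1n := hc1pos n
  have hc2n := hc2pos n
  set P : ℝ := (n : ℝ) ^ 2 * c1 n with hPdef
  have hP : 0 < P := by positivity
  set ε : ℝ := C ^ 2 / P with hεdef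
  have hε0 : 0 ≤ ε := by positivity
  have hεeq : ε * P = C ^ 2 := div_mul_cancel₀ _ hP.ne'
  -- bounds on s
  have hS : ∀ k, 0 ≤ tdrrS p a n k ∧ tdrrS p a n k ≤ C / n := by
    intro k
    unfold tdrrS
    split_ifs with h
    · have h0 := ha0 n k h
      have h1 := hC n hn1 k h
      have hd : (0 : ℝ) < a n k + 1 := by linarith
      refine ⟨div_nonneg h0 hd.le, ?_⟩
      have : a n k / (a n k + 1) ≤ a n k := by
        rw [div_le_iff₀ hd]; nlinarith
      linarith
    · exact ⟨le_rfl, div_nonneg hC0 hnpos.le⟩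
  have hsq : ∀ k, (tdrrS p a n k) ^ 2 ≤ C ^ 2 / (n : ℝ) ^ 2 := by
    intro k
    have h := hS k
    calc (tdrrS p a n k) ^ 2 ≤ (C / n) ^ 2 := pow_le_pow_left₀ h.1 h.2 2
      _ = C ^ 2 / (n : ℝ) ^ 2 := by rw [div_pow]
  have hstar : ∀ k, |tdrrSStar p a c1 n k| ≤ ε := by
    intro k
    unfold tdrrSStar
    split_ifs with h
    · have h1 := hsq k
      have h2 := hsq (k + 1)
      have hs1 := sq_nonneg (tdrrS p a n k)
      have hs2 := sq_nonneg (tdrrS p a n (k + 1))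
      have hden : 0 < (tdrrS p a n (k + 1)) ^ 2 + c1 n := by linarith
      have hrw : ((tdrrS p a n k) ^ 2 + c1 n) / ((tdrrS p a n (k + 1)) ^ 2 + c1 n) - 1
          = ((tdrrS p a n k) ^ 2 - (tdrrS p a n (k + 1)) ^ 2)
            / ((tdrrS p a n (k + 1)) ^ 2 + c1 n) := by
        field_simp
        ring
      rw [hrw, abs_div, abs_of_pos hden]
      have hnum : |(tdrrS p a n k) ^ 2 - (tdrrS p a n (k + 1)) ^ 2| ≤ C ^ 2 / (n : ℝ) ^ 2 := by
        rw [abs_le]; constructor <;> linarith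
      calc _ ≤ (C ^ 2 / (n : ℝ) ^ 2) / c1 n :=
            div_le_div₀ (by positivity) hnum hc1n (by linarith)
        _ = ε := by rw [hεdef, hPdef, div_div]
    · simpa using hε0
  -- product inequality
  have hn' : (1 + τ) * C ^ 2 < (P * c2 n) * (1 - τ) := by
    rw [div_mul_eq_mul_div] at hn
    have h3 := (div_lt_iff₀ h1τ).mp hn
    calc (1 + τ) * C ^ 2 < ((n : ℝ) ^ 2 * c1 n * c2 n) * (1 - τ) := h3
      _ = (P * c2 n) * (1 - τ) := by rw [hPdef]
  have hεc2 : (1 + τ) * ε < (1 - τ) * c2 n := by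
    have h3 : (1 + τ) * ε * P < ((1 - τ) * c2 n) * P := by
      have h4 : (1 + τ) * ε * P = (1 + τ) * C ^ 2 := by rw [mul_assoc, hεeq]
      rw [h4]; linarith [hn']
    exact lt_of_mul_lt_mul_right h3 hP.le
  have hsj := abs_le.mp (hstar j)
  have hsj1 := abs_le.mp (hstar (j + 1))
  have hεc2' : ε < c2 n := by nlinarith [mul_nonneg hτ0.le hε0, mul_pos hτ0 hc2n]
  have hden : 0 < tdrrSStar p a c1 n j + c2 n := by linarith [hsj.1]
  unfold tdrrR
  rw [lt_div_iff₀ hden]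
  have hq : τ * (tdrrSStar p a c1 n j + c2 n) ≤ τ * (ε + c2 n) :=
    mul_le_mul_of_nonneg_left (by linarith [hsj.2]) hτ0.le
  have hexp : ε + τ * ε < c2 n - τ * c2 n := by linarith [hεc2]
  have hmul : τ * (ε + c2 n) = τ * ε + τ * c2 n := by ring
  linarith [hsj1.1]
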